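/- Let q ≥ 2, d odd, w ≤ n, and t = ⌈(2w-d+1)/2⌉ with t ≥ 0. Then A_q(n,d,w) ≤ C(n,t)·(q-1)^t / C(w,t), where A_q(n,d,w) is the maximum size of a q-ary constant-weight code of length n, weight w, minimum Hamming distance d. -/
import Mathlib


/-- `C` is a `q`-ary constant-weight code of length `n`, weight `w`,
and minimum Hamming distance `d`. -/
def isCode (q n d w : ℕ) (C : Finset (Fin n → ZMod q)) : Prop :=
  (∀ x ∈ C, hammingNorm x = w) ∧
  ∀ x ∈ C, ∀ y ∈ C, x ≠ y → d ≤ hammingDist x y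

/-- `A_q(n,d,w)`: the maximum size of a `q`-ary constant-weight code of
length `n`, weight `w`, and minimum Hamming distance `d`. -/
noncomputable def maxA (q n d w : ℕ) : ℕ :=
  sSup {m | ∃ C : Finset (Fin n → ZMod q), isCode q n d w C ∧ C.card = m}

open Finset

lemma card_supp_eq_le (q : ℕ) (hq : 2 ≤ q) (n t : ℕ) (s : Finset (Fin n)) (hst : s.card = t) :
    haveI : NeZero q := ⟨by omega⟩
    ({v : Fin n → ZMod q | ({i | v i ≠ 0} : Finset (Fin n)) = s} : Finset _).card
      ≤ (q - 1) ^ t := by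
  classical
  haveI : NeZero q := ⟨by omega⟩
  haveI : Fact (1 < q) := ⟨by omega⟩
  have : ({v : Fin n → ZMod q | ({i | v i ≠ 0} : Finset (Fin n)) = s} : Finset _).card
      ≤ (Finset.univ : Finset ((i : s) → {a : ZMod q // a ≠ 0})).card := by
    apply Finset.card_le_card_of_injOn
      (fun v => fun i => if h : v i ≠ 0 then ⟨v i, h⟩ else ⟨1, one_ne_zero⟩)
    · intro v hv; exact Finset.mem_univ _
    · intro v hv v' hv' h
      simp only [Finset.mem_coe, Finset.mem_filter, Finset.mem_univ, true_and] at hv hv'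
      have hv0 : ∀ i : s, v i ≠ 0 := by
        intro i
        have : (i : Fin n) ∈ ({j | v j ≠ 0} : Finset (Fin n)) := hv ▸ i.2
        simpa using this
      have hv'0 : ∀ i : s, v' i ≠ 0 := by
        intro i
        have : (i : Fin n) ∈ ({j | v' j ≠ 0} : Finset (Fin n)) := hv' ▸ i.2
        simpa using this
      funext i
      by_cases his : i ∈ s
      · have := congrFun h ⟨i, his⟩
        simp only [dif_pos (hv0 ⟨i, his⟩), dif_pos (hv'0 ⟨i, his⟩)] at this
        exact congrArg Subtype.val this
      · have h1 : v i = 0 := by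
          by_contra hne
          exact his (hv ▸ (by simp [hne] : i ∈ ({j | v j ≠ 0} : Finset (Fin n))))
        have h2 : v' i = 0 := by
          by_contra hne
          exact his (hv' ▸ (by simp [hne] : i ∈ ({j | v' j ≠ 0} : Finset (Fin n))))
        rw [h1, h2]
  refine this.trans ?_
  rw [Finset.card_univ, Fintype.card_pi]
  have hcard : Fintype.card {a : ZMod q // a ≠ 0} = q - 1 := by
    have := Fintype.card_subtype_compl (p := fun a : ZMod q => a = 0)
    simp only [Fintype.card_subtype_eq] at this
    exact this.trans (by rw [ZMod.card])
  calc ∏ _i : s, Fintype.card {a : ZMod q // a ≠ 0} = (q-1) ^ s.card := by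
        rw [Finset.prod_const, hcard]; simp
    _ ≤ (q-1)^t := by rw [hst]

lemma key (q n d w t : ℕ) (hq : 2 ≤ q) (htw : t ≤ w) (hlt : 2 * (w - t) < d)
    (C : Finset (Fin n → ZMod q)) (hC : isCode q n d w C) :
    C.card * Nat.choose w t ≤ Nat.choose n t * (q - 1) ^ t := by
  classical
  haveI : NeZero q := ⟨by omega⟩
  obtain ⟨hCw, hCd⟩ := hC
  set V : Finset (Fin n → ZMod q) := {v | hammingNorm v = t} with hV
  set F : (Fin n → ZMod q) → Finset (Fin n → ZMod q) := fun x =>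
    (Finset.powersetCard t ({i | x i ≠ 0} : Finset (Fin n))).image
      (fun s i => if i ∈ s then x i else 0) with hF
  have hsupp : ∀ (x : Fin n → ZMod q) (s : Finset (Fin n)),
      s ⊆ ({i | x i ≠ 0} : Finset (Fin n)) → ∀ v : Fin n → ZMod q,
      (∀ i, v i = if i ∈ s then x i else 0) →
      ({i | v i ≠ 0} : Finset (Fin n)) = s := by
    intro x s hs v hv
    ext i
    simp only [mem_filter, mem_univ, true_and, hv i]
    by_cases h : i ∈ s
    · simp only [h, if_true, iff_true]
      have := hs h
      simpa using this
    · simp [h]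
  have hFV : ∀ x ∈ C, F x ⊆ V := by
    intro x hx v hv
    simp only [hF, mem_image] at hv
    obtain ⟨s, hs, rfl⟩ := hv
    rw [Finset.mem_powersetCard] at hs
    simp only [hV, mem_filter, mem_univ, true_and]
    rw [hammingNorm, hsupp x s hs.1 _ (fun i => rfl)]
    exact hs.2
  have hFcard : ∀ x ∈ C, (F x).card = Nat.choose w t := by
    intro x hx
    rw [hF]
    rw [Finset.card_image_of_injOn, Finset.card_powersetCard]
    · congr 1
      have := hCw x hx
      rw [hammingNorm] at this
      exact this
    · intro s hs s' hs' h
      rw [Finset.mem_coe, Finset.mem_powersetCard] at hs hs'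
      have e1 := hsupp x s hs.1 (fun i => if i ∈ s then x i else 0) (fun i => rfl)
      have e2 := hsupp x s' hs'.1 (fun i => if i ∈ s then x i else 0)
        (fun i => congrFun h i)
      rw [← e1, ← e2]
  have hdisj : ∀ x ∈ C, ∀ y ∈ C, x ≠ y → Disjoint (F x) (F y) := by
    intro x hx y hy hxy
    rw [Finset.disjoint_left]
    intro v hvx hvy
    simp only [hF, mem_image] at hvx hvy
    obtain ⟨s, hs, hvs⟩ := hvx
    obtain ⟨s', hs', hvs'⟩ := hvy
    rw [Finset.mem_powersetCard] at hs hs'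
    have hss' : s = s' := by
      have h1 := hsupp x s hs.1 v (fun i => (congrFun hvs i).symm)
      have h2 := hsupp y s' hs'.1 v (fun i => (congrFun hvs' i).symm)
      rw [← h1, ← h2]
    subst hss'
    have hagree : ∀ i ∈ s, x i = y i := by
      intro i hi
      have := congrFun (hvs.trans hvs'.symm) i
      simpa [hi] using this
    have hdist : hammingDist x y ≤ 2 * (w - t) := by
      have hsub : ({i | x i ≠ y i} : Finset (Fin n)) ⊆
          (({i | x i ≠ 0} : Finset (Fin n)) ∪ ({i | y i ≠ 0} : Finset (Fin n))) \ s := by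
        intro i hi
        simp only [mem_filter, mem_univ, true_and] at hi
        rw [Finset.mem_sdiff, Finset.mem_union]
        constructor
        · simp only [mem_filter, mem_univ, true_and]
          by_contra h
          push_neg at h
          exact hi (h.1.trans h.2.symm)
        · intro his
          exact hi (hagree i his)
      have hcard := Finset.card_le_card hsub
      rw [hammingDist]
      have hsx : s ⊆ ({i | x i ≠ 0} : Finset (Fin n)) := hs.1
      have hsy : s ⊆ ({i | y i ≠ 0} : Finset (Fin n)) := hs'.1
      have hunion : ((({i | x i ≠ 0} : Finset (Fin n)) ∪ ({i | y i ≠ 0} : Finset (Fin n))) \ s).card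
          ≤ 2 * (w - t) := by
        rw [Finset.card_sdiff_of_subset (hsx.trans Finset.subset_union_left)]
        have h1 : (({i | x i ≠ 0} : Finset (Fin n)) ∪ ({i | y i ≠ 0} : Finset (Fin n))).card
            + s.card ≤
            ({i | x i ≠ 0} : Finset (Fin n)).card + ({i | y i ≠ 0} : Finset (Fin n)).card := by
          have h2 : s ⊆ ({i | x i ≠ 0} : Finset (Fin n)) ∩ ({i | y i ≠ 0} : Finset (Fin n)) :=
            Finset.subset_inter hsx hsy
          have := Finset.card_union_add_card_inter ({i | x i ≠ 0} : Finset (Fin n))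
            ({i | y i ≠ 0} : Finset (Fin n))
          have h3 := Finset.card_le_card h2
          omega
        have hxw : ({i | x i ≠ 0} : Finset (Fin n)).card = w := hCw x hx
        have hyw : ({i | y i ≠ 0} : Finset (Fin n)).card = w := hCw y hy
        have hst : s.card = t := hs.2
        omega
      omega
    have := hCd x hx y hy hxy
    omega
  have hVcard : V.card ≤ Nat.choose n t * (q - 1) ^ t := by
    have hVsub : V ⊆ (Finset.powersetCard t (Finset.univ : Finset (Fin n))).biUnion
        (fun s => ({v : Fin n → ZMod q | ({i | v i ≠ 0} : Finset (Fin n)) = s} : Finset _)) := by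
      intro v hv
      simp only [hV, mem_filter, mem_univ, true_and] at hv
      rw [Finset.mem_biUnion]
      refine ⟨Finset.filter (fun i => v i ≠ 0) Finset.univ, ?_, ?_⟩
      · rw [Finset.mem_powersetCard]
        exact ⟨Finset.subset_univ _, hv⟩
      · simp
    calc V.card ≤ _ := Finset.card_le_card hVsub
      _ ≤ _ := Finset.card_biUnion_le
      _ ≤ Nat.choose n t * (q - 1) ^ t := by
        have hbound : ∀ s ∈ Finset.powersetCard t (Finset.univ : Finset (Fin n)),
            ({v : Fin n → ZMod q | ({i | v i ≠ 0} : Finset (Fin n)) = s} : Finset _).card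
              ≤ (q - 1) ^ t := by
          intro s hs
          rw [Finset.mem_powersetCard] at hs
          exact card_supp_eq_le q hq n t s hs.2
        calc ∑ s ∈ Finset.powersetCard t (Finset.univ : Finset (Fin n)),
              ({v : Fin n → ZMod q | ({i | v i ≠ 0} : Finset (Fin n)) = s} : Finset _).card
            ≤ ∑ _s ∈ Finset.powersetCard t (Finset.univ : Finset (Fin n)), (q - 1) ^ t :=
              Finset.sum_le_sum hbound
          _ = Nat.choose n t * (q - 1) ^ t := by
              rw [Finset.sum_const, Finset.card_powersetCard, Finset.card_univ,
                Fintype.card_fin, smul_eq_mul]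
  calc C.card * Nat.choose w t = ∑ x ∈ C, (F x).card := by
        rw [Finset.sum_congr rfl hFcard, Finset.sum_const, smul_eq_mul]
    _ = (C.biUnion F).card := (Finset.card_biUnion hdisj).symm
    _ ≤ V.card := Finset.card_le_card (Finset.biUnion_subset.2 hFV)
    _ ≤ Nat.choose n t * (q - 1) ^ t := hVcard

/-- Johnson-type bound for odd distance: with `t = ⌈(2w-d+1)/2⌉`,
`A_q(n,d,w) ≤ C(n,t)(q-1)^t / C(w,t)`. -/
theorem stmt2 (q n d w t : ℕ) (hq : 2 ≤ q) (hw : w ≤ n) (hd : Odd d)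
    (hdw : d ≤ 2 * w) (ht : t = (2 * w - d + 2) / 2) :
    (maxA q n d w : ℚ) ≤
      ((Nat.choose n t * (q - 1) ^ t : ℕ) : ℚ) / ((Nat.choose w t : ℕ) : ℚ) := by
  obtain ⟨k, hk⟩ := hd
  have htw : t ≤ w := by omega
  have hlt : 2 * (w - t) < d := by omega
  have hwt_pos : 0 < Nat.choose w t := Nat.choose_pos htw
  have hmax : maxA q n d w ≤ Nat.choose n t * (q - 1) ^ t / Nat.choose w t := by
    apply csSup_le'
    rintro m ⟨C, hC, rfl⟩
    rw [Nat.le_div_iff_mul_le hwt_pos]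
    exact key q n d w t hq htw hlt C hC
  calc (maxA q n d w : ℚ) ≤ ((Nat.choose n t * (q - 1) ^ t / Nat.choose w t : ℕ) : ℚ) := by
        exact_mod_cast hmax
    _ ≤ _ := Nat.cast_div_le
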